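/- Let A(x) = Γ(x+1) (the real Gamma function) and B(x) = cos(x). The pair {A, B} is not topologically transitive with respect to the Lindenmayer system L₁: there exist nonempty open intervals U and V of ℝ such that for every positive integer k and every x ∈ U, the k-th L₁-iterate of x (the composition of the first k maps prescribed by the infinite word of L₁, applied to x) does not belong to V. -/

import Mathlib

/-- The Thue–Morse sequence: `thueMorse n` is `true` iff the number of `1`s in
the binary expansion of `n` is odd. -/
def thueMorse (n : ℕ) : Bool := decide (Odd ((Nat.digits 2 n).count 1))

/-- The L₁-iterated sequence of a pair of maps `(A, B)` with initial value `x`;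
its value at `k` is the `k`-th L₁-iterate of `x`. -/
def L1Seq (A B : ℝ → ℝ) (a : ℝ) : ℕ → ℝ
  | 0 => a
  | n + 1 => if thueMorse n then B (L1Seq A B a n) else A (L1Seq A B a n)

lemma gamma_le_one_aux {s : ℝ} (h1 : 1 ≤ s) (h2 : s ≤ 2) : Real.Gamma s ≤ 1 := by
  have hc := Real.convexOn_log_Gamma.2 (Set.mem_Ioi.mpr one_pos)
    (Set.mem_Ioi.mpr two_pos) (sub_nonneg.mpr h2) (sub_nonneg.mpr h1)
    (by ring : (2 - s) + (s - 1) = 1)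
  simp only [smul_eq_mul, Function.comp_apply, Real.Gamma_one, Real.Gamma_two,
    Real.log_one, mul_zero, add_zero, mul_one] at hc
  have hs : 2 - s + (s - 1) * 2 = s := by ring
  rw [hs] at hc
  have hpos : 0 < Real.Gamma s := Real.Gamma_pos_of_pos (by linarith)
  have : Real.log (Real.Gamma s) ≤ 0 := by linarith
  exact (Real.log_nonpos_iff hpos.le).mp this

/-- For `A x = Γ (x + 1)` and `B x = cos x`, the pair `{A, B}` is not
topologically transitive with respect to the Lindenmayer system L₁: there are
nonempty open intervals `U = Ioo u₁ u₂` and `V = Ioo v₁ v₂` such that no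
L₁-iterate of any point of `U` lies in `V`. -/
theorem L1Seq_gamma_cos_not_topologically_transitive :
    ∃ u₁ u₂ v₁ v₂ : ℝ, u₁ < u₂ ∧ v₁ < v₂ ∧
      ∀ k : ℕ, 0 < k → ∀ x ∈ Set.Ioo u₁ u₂,
        L1Seq (fun x => Real.Gamma (x + 1)) Real.cos x k ∉ Set.Ioo v₁ v₂ := by
  refine ⟨0, 1, 2, 3, by norm_num, by norm_num, ?_⟩
  intro k _ x hx
  have key : ∀ n : ℕ, 0 < L1Seq (fun x => Real.Gamma (x + 1)) Real.cos x n ∧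
      L1Seq (fun x => Real.Gamma (x + 1)) Real.cos x n ≤ 1 := by
    intro n
    induction n with
    | zero => exact ⟨hx.1, le_of_lt hx.2⟩
    | succ m ih =>
      obtain ⟨h0, h1⟩ := ih
      set y := L1Seq (fun x => Real.Gamma (x + 1)) Real.cos x m with hy
      show 0 < (if thueMorse m then Real.cos y else Real.Gamma (y + 1)) ∧
        (if thueMorse m then Real.cos y else Real.Gamma (y + 1)) ≤ 1
      split
      · constructor
        · apply Real.cos_pos_of_mem_Ioo
          constructor
          · linarith [Real.pi_gt_three]
          · linarith [Real.pi_gt_three]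
        · exact Real.cos_le_one y
      · exact ⟨Real.Gamma_pos_of_pos (by linarith),
          gamma_le_one_aux (by linarith) (by linarith)⟩
  intro hmem
  have := (key k).2
  have := hmem.1
  linarith
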